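/- Let β, α, μ₂, d₂ > 0, θ ∈ ℝ, c > 0. Suppose S, I : ℝ → ℝ with I differentiable, S(ξ) > 0 and I(ξ) > 0 for all ξ, and I satisfies cI'(ξ) = d₂𝔍[I](ξ) + βS(ξ)I(ξ)/(1 + αI(ξ)) − μ₂I(ξ) for all ξ ∈ ℝ. Set ν = (4d₂ + μ₂)/c and W(ξ) = e^{νξ}I(ξ). Then W'(ξ) > 0 for all ξ ∈ ℝ, i.e. W is strictly increasing; consequently, for every a ≥ 0 and ξ ∈ ℝ, I(ξ − a) ≤ e^{νa}I(ξ). -/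

import Mathlib

/-- Discrete Laplacian in direction `θ`. -/
noncomputable def lap (θ : ℝ) (φ : ℝ → ℝ) (ξ : ℝ) : ℝ :=
  φ (ξ + Real.sin θ) + φ (ξ - Real.sin θ) + φ (ξ + Real.cos θ) + φ (ξ - Real.cos θ) - 4 * φ ξ

theorem stmt_13 (β α μ₂ d₂ θ c : ℝ)
    (hβ : 0 < β) (hα : 0 < α) (hμ₂ : 0 < μ₂) (hd₂ : 0 < d₂) (hc : 0 < c)
    (S I : ℝ → ℝ) (hIdiff : Differentiable ℝ I)
    (hSpos : ∀ ξ : ℝ, 0 < S ξ) (hIpos : ∀ ξ : ℝ, 0 < I ξ)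
    (hIeq : ∀ ξ : ℝ, c * deriv I ξ =
      d₂ * lap θ I ξ + β * S ξ * I ξ / (1 + α * I ξ) - μ₂ * I ξ)
    (ν : ℝ) (hν : ν = (4 * d₂ + μ₂) / c)
    (W : ℝ → ℝ) (hW : ∀ ξ : ℝ, W ξ = Real.exp (ν * ξ) * I ξ) :
    (∀ ξ : ℝ, 0 < deriv W ξ) ∧ StrictMono W ∧
      ∀ a : ℝ, 0 ≤ a → ∀ ξ : ℝ, I (ξ - a) ≤ Real.exp (ν * a) * I ξ := by
  have hWf : W = fun ξ => Real.exp (ν * ξ) * I ξ := funext hW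
  have hDW : ∀ ξ : ℝ, HasDerivAt W (Real.exp (ν * ξ) * (ν * I ξ + deriv I ξ)) ξ := by
    intro ξ
    have h1 : HasDerivAt (fun x : ℝ => ν * x) ν ξ := by
      simpa using (hasDerivAt_id ξ).const_mul ν
    have h2 : HasDerivAt (fun x : ℝ => Real.exp (ν * x)) (Real.exp (ν * ξ) * ν) ξ := h1.exp
    have h3 : HasDerivAt (fun x => Real.exp (ν * x) * I x)
        (Real.exp (ν * ξ) * ν * I ξ + Real.exp (ν * ξ) * deriv I ξ) ξ :=
      h2.mul (hIdiff ξ).hasDerivAt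
    rw [hWf]
    convert h3 using 1
    ring
  have key : ∀ ξ : ℝ, 0 < ν * I ξ + deriv I ξ := by
    intro ξ
    have hlap : 0 < d₂ * (4 * I ξ + lap θ I ξ) := by
      have := hIpos (ξ + Real.sin θ)
      have := hIpos (ξ - Real.sin θ)
      have := hIpos (ξ + Real.cos θ)
      have := hIpos (ξ - Real.cos θ)
      unfold lap
      nlinarith
    have hfrac : 0 < β * S ξ * I ξ / (1 + α * I ξ) := by
      have h1 : 0 < 1 + α * I ξ := by nlinarith [hIpos ξ]
      exact div_pos (mul_pos (mul_pos hβ (hSpos ξ)) (hIpos ξ)) h1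
    have hνc : ν * c = 4 * d₂ + μ₂ := by
      rw [hν]; field_simp
    have hpos : 0 < c * (ν * I ξ + deriv I ξ) := by
      have heq := hIeq ξ
      nlinarith [hIpos ξ]
    by_contra hcon
    push_neg at hcon
    nlinarith
  have hderivW : ∀ ξ : ℝ, 0 < deriv W ξ := by
    intro ξ
    rw [(hDW ξ).deriv]
    exact mul_pos (Real.exp_pos _) (key ξ)
  have hmono : StrictMono W := by
    apply strictMono_of_deriv_pos hderivW
  refine ⟨hderivW, hmono, ?_⟩
  intro a ha ξ
  have h := hmono.monotone (sub_le_self ξ ha)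
  rw [hW, hW] at h
  have hE : Real.exp (ν * ξ) = Real.exp (ν * (ξ - a)) * Real.exp (ν * a) := by
    rw [← Real.exp_add]; ring_nf
  rw [hE, mul_assoc] at h
  exact le_of_mul_le_mul_left h (Real.exp_pos _)
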